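/- Suppose $f = \frac{1}{n}\sum_{i=1}^n f_i$ where $f$ is $L$-smooth, $f$ satisfies the $\mu$-PL condition with minimum value $f(x^*)$, and the weak growth condition holds with parameter $\alpha > 0$: $\mathbb{E}_i[\|\nabla f_i(x)\|^2] \leq 2\alpha L(f(x)-f(x^*))$ where $i$ is uniform on $\{1,\ldots,n\}$. Then SGD with constant step size $\eta = \frac{\mu}{L^2\alpha}$, i.e., $x^{k+1} = x^k - \eta \nabla f_{i_k}(x^k)$ with $i_k$ sampled uniformly and independently, satisfies $\mathbb{E}[f(x^K) - f(x^*)] \leq \left(1 - \frac{\mu^2}{L^2\alpha}\right)^K (f(x^0) - f(x^*))$ for every $K \geq 0$. -/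

import Mathlib

noncomputable section

open InnerProductSpace RealInnerProductSpace

/-- Descent lemma: a differentiable function with `L`-Lipschitz gradient satisfies
`F y ≤ F x + ⟪∇F x, y - x⟫ + L/2 ‖y - x‖²`. -/
lemma descent_lemma {E : Type*} [NormedAddCommGroup E] [InnerProductSpace ℝ E]
    [CompleteSpace E] {F : E → ℝ} (hF : Differentiable ℝ F) {L : ℝ} (hL : 0 ≤ L)
    (hlip : ∀ x y, ‖gradient F x - gradient F y‖ ≤ L * ‖x - y‖) (x y : E) :
    F y ≤ F x + ⟪gradient F x, y - x⟫_ℝ + L / 2 * ‖y - x‖ ^ 2 := by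
  set v := y - x with hv
  have hgrad : ∀ z, HasGradientAt F (gradient F z) z := fun z => (hF z).hasGradientAt
  have hcontg : Continuous (gradient F) := by
    have : LipschitzWith (Real.toNNReal L) (gradient F) := by
      apply LipschitzWith.of_dist_le_mul
      intro a b
      rw [dist_eq_norm, dist_eq_norm, Real.coe_toNNReal L hL]
      exact hlip a b
    exact this.continuous
  have hderiv : ∀ t : ℝ, HasDerivAt (fun t : ℝ => F (x + t • v))
      (⟪gradient F (x + t • v), v⟫_ℝ) t := by
    intro t
    have h1 : HasDerivAt (fun t : ℝ => x + t • v) v t := by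
      simpa using ((hasDerivAt_id t).smul_const v).const_add x
    have h2 := ((hgrad (x + t • v)).hasFDerivAt).comp_hasDerivAt t h1
    simpa [InnerProductSpace.toDual_apply_apply, Function.comp_def] using h2
  have hcont' : Continuous fun t : ℝ => ⟪gradient F (x + t • v), v⟫_ℝ := by
    exact (hcontg.comp (by continuity)).inner continuous_const
  have key : F y - F x = ∫ t in (0:ℝ)..1, ⟪gradient F (x + t • v), v⟫_ℝ := by
    have h := intervalIntegral.integral_eq_sub_of_hasDerivAt
      (fun t _ => hderiv t) (hcont'.intervalIntegrable 0 1)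
    have h1 : x + (1:ℝ) • v = y := by rw [hv]; simp
    have h0 : x + (0:ℝ) • v = x := by simp
    rw [h, h1, h0]
  have hbound : ∫ t in (0:ℝ)..1, ⟪gradient F (x + t • v), v⟫_ℝ
      ≤ ∫ t in (0:ℝ)..1, (⟪gradient F x, v⟫_ℝ + L * t * ‖v‖ ^ 2) := by
    apply intervalIntegral.integral_mono_on (by norm_num)
      (hcont'.intervalIntegrable 0 1)
      ((by continuity : Continuous fun t : ℝ =>
        ⟪gradient F x, v⟫_ℝ + L * t * ‖v‖ ^ 2).intervalIntegrable 0 1)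
    intro t ht
    rcases ht with ⟨ht0, ht1⟩
    have h1 : ⟪gradient F (x + t • v) - gradient F x, v⟫_ℝ ≤ L * t * ‖v‖ ^ 2 := by
      calc ⟪gradient F (x + t • v) - gradient F x, v⟫_ℝ
          ≤ ‖gradient F (x + t • v) - gradient F x‖ * ‖v‖ := real_inner_le_norm _ _
        _ ≤ (L * ‖(x + t • v) - x‖) * ‖v‖ :=
            mul_le_mul_of_nonneg_right (hlip _ _) (norm_nonneg _)
        _ = L * t * ‖v‖ ^ 2 := by
            rw [add_sub_cancel_left, norm_smul, Real.norm_eq_abs, abs_of_nonneg ht0]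
            ring
    have h2 : ⟪gradient F (x + t • v) - gradient F x, v⟫_ℝ
        = ⟪gradient F (x + t • v), v⟫_ℝ - ⟪gradient F x, v⟫_ℝ := inner_sub_left _ _ _
    linarith
  have hval : ∫ t in (0:ℝ)..1, (⟪gradient F x, v⟫_ℝ + L * t * ‖v‖ ^ 2)
      = ⟪gradient F x, v⟫_ℝ + L / 2 * ‖v‖ ^ 2 := by
    rw [intervalIntegral.integral_add (intervalIntegrable_const)
      (((by continuity : Continuous fun t : ℝ => L * t * ‖v‖ ^ 2)).intervalIntegrable 0 1)]
    have : (fun t : ℝ => L * t * ‖v‖ ^ 2) = fun t : ℝ => (L * ‖v‖ ^ 2) * t := by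
      funext t; ring
    rw [this, intervalIntegral.integral_const, intervalIntegral.integral_const_mul,
      integral_id]
    simp; ring
  rw [hval] at hbound
  linarith [key ▸ hbound]

/-- The SGD iterates after `K` steps, as a function of the sequence of sampled
indices `ω : Fin K → Fin n`, with gradient oracle `g`, step size `η` and
initialization `x0`. -/
def sgdRun {d n : ℕ}
    (g : Fin n → EuclideanSpace ℝ (Fin d) → EuclideanSpace ℝ (Fin d))
    (η : ℝ) (x0 : EuclideanSpace ℝ (Fin d)) :
    (K : ℕ) → (Fin K → Fin n) → EuclideanSpace ℝ (Fin d)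
  | 0, _ => x0
  | K + 1, ω =>
      sgdRun g η x0 K (fun j => ω j.castSucc) -
        η • g (ω (Fin.last K)) (sgdRun g η x0 K (fun j => ω j.castSucc))

set_option maxHeartbeats 1000000 in
/-- Linear convergence of SGD for `μ`-PL functions under the weak growth
condition, with step size `η = μ / (L² α)`.  The expectation is over the
i.i.d. uniform index sequence. -/
theorem sgd_pl_wgc_linear_rate
    (d n : ℕ) (hn : 0 < n)
    (f : Fin n → EuclideanSpace ℝ (Fin d) → ℝ)
    (hdiff : ∀ i, Differentiable ℝ (f i))
    (F : EuclideanSpace ℝ (Fin d) → ℝ)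
    (hF : F = fun x => (n : ℝ)⁻¹ * ∑ i, f i x)
    (L μ α : ℝ) (hL : 0 < L) (hμ : 0 < μ) (hμL : μ ≤ L) (hα : μ / L ≤ α)
    (hsmooth : ∀ x y : EuclideanSpace ℝ (Fin d),
      ‖gradient F x - gradient F y‖ ≤ L * ‖x - y‖)
    (xstar : EuclideanSpace ℝ (Fin d))
    (hmin : ∀ x, F xstar ≤ F x)
    (hPL : ∀ x, F x - F xstar ≤ 1 / (2 * μ) * ‖gradient F x‖ ^ 2)
    (hWGC : ∀ x, (n : ℝ)⁻¹ * ∑ i, ‖gradient (f i) x‖ ^ 2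
      ≤ 2 * α * L * (F x - F xstar))
    (η : ℝ) (hη : η = μ / (L ^ 2 * α))
    (x0 : EuclideanSpace ℝ (Fin d)) (K : ℕ) :
    ((n : ℝ) ^ K)⁻¹ *
        ∑ ω : Fin K → Fin n,
          (F (sgdRun (fun i => gradient (f i)) η x0 K ω) - F xstar)
      ≤ (1 - μ ^ 2 / (L ^ 2 * α)) ^ K * (F x0 - F xstar) := by
  have hnR : (0 : ℝ) < n := Nat.cast_pos.mpr hn
  have hα0 : 0 < α := lt_of_lt_of_le (div_pos hμ hL) hα
  have hη0 : 0 < η := by rw [hη]; positivity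
  -- F is differentiable
  have hFd : Differentiable ℝ F := by
    rw [hF]
    exact (Differentiable.fun_sum fun i _ => hdiff i).const_mul _
  -- gradient of F is the average of the gradients
  have hgradF : ∀ x, gradient F x = (n : ℝ)⁻¹ • ∑ i, gradient (f i) x := by
    intro x
    have h : HasGradientAt F ((n : ℝ)⁻¹ • ∑ i, gradient (f i) x) x := by
      rw [hasGradientAt_iff_hasFDerivAt]
      have hsum : HasFDerivAt (fun y => ∑ i, f i y)
          (∑ i, InnerProductSpace.toDual ℝ _ (gradient (f i) x)) x :=
        HasFDerivAt.fun_sum (fun i _ => ((hdiff i x).hasGradientAt).hasFDerivAt)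
      have h2 := hsum.const_mul ((n : ℝ)⁻¹)
      rw [hF]
      convert h2 using 1
      · rfl
      · rw [map_smulₛₗ, map_sum]; simp
    exact h.gradient
  -- one-step contraction
  have onestep : ∀ x : EuclideanSpace ℝ (Fin d),
      (∑ i, (F (x - η • gradient (f i) x) - F xstar))
        ≤ n * ((1 - μ ^ 2 / (L ^ 2 * α)) * (F x - F xstar)) := by
    intro x
    set G := gradient F x with hG
    set g : Fin n → EuclideanSpace ℝ (Fin d) := fun i => gradient (f i) x with hg
    have hdescent : ∀ i, F (x - η • g i) - F xstar
        ≤ (F x - F xstar) - η * ⟪G, g i⟫_ℝ + L / 2 * η ^ 2 * ‖g i‖ ^ 2 := by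
      intro i
      have h := descent_lemma hFd hL.le hsmooth x (x - η • g i)
      have h1 : x - η • g i - x = -(η • g i) := by abel
      rw [h1] at h
      have h2 : ⟪G, -(η • g i)⟫_ℝ = -(η * ⟪G, g i⟫_ℝ) := by
        rw [inner_neg_right, real_inner_smul_right]
      have h3 : ‖-(η • g i)‖ ^ 2 = η ^ 2 * ‖g i‖ ^ 2 := by
        rw [norm_neg, norm_smul, Real.norm_eq_abs, mul_pow, sq_abs]
      rw [h2, h3] at h
      nlinarith [h]
    have hsum := Finset.sum_le_sum (fun i (_ : i ∈ Finset.univ) => hdescent i)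
    -- the inner product sum
    have hip : ∑ i, ⟪G, g i⟫_ℝ = n * ‖G‖ ^ 2 := by
      have h1 : ∑ i, ⟪G, g i⟫_ℝ = ⟪G, ∑ i, g i⟫_ℝ := (inner_sum _ _ _).symm
      have h2 : (∑ i, g i) = (n : ℝ) • G := by
        rw [hG, hgradF x, smul_smul, mul_inv_cancel₀ (ne_of_gt hnR), one_smul]
      rw [h1, h2, real_inner_smul_right, real_inner_self_eq_norm_sq]
    -- WGC bound
    have hwgc : ∑ i, ‖g i‖ ^ 2 ≤ n * (2 * α * L * (F x - F xstar)) := by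
      calc ∑ i, ‖g i‖ ^ 2 = n * ((n : ℝ)⁻¹ * ∑ i, ‖g i‖ ^ 2) := by
            field_simp
        _ ≤ n * (2 * α * L * (F x - F xstar)) :=
            mul_le_mul_of_nonneg_left (hWGC x) hnR.le
    have hpl := hPL x
    have hgap : 0 ≤ F x - F xstar := sub_nonneg.mpr (hmin x)
    have hPL' : 2 * μ * (F x - F xstar) ≤ ‖G‖ ^ 2 := by
      rw [hG]
      have h2μ : (0:ℝ) < 2 * μ := by linarith
      calc 2 * μ * (F x - F xstar) ≤ 2 * μ * (1 / (2 * μ) * ‖gradient F x‖ ^ 2) :=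
            mul_le_mul_of_nonneg_left hpl h2μ.le
        _ = ‖gradient F x‖ ^ 2 := by field_simp
    -- key algebraic identity : η² L² α = η μ , η μ = μ²/(L²α)
    have hηident : η * μ = μ ^ 2 / (L ^ 2 * α) := by
      rw [hη]; field_simp
    have hηident2 : L ^ 2 * α * η ^ 2 = η * μ := by
      rw [hη]; field_simp
    -- combine
    have hsum' : ∑ i, (F (x - η • g i) - F xstar)
        ≤ n * (F x - F xstar) - η * (n * ‖G‖ ^ 2)
          + L / 2 * η ^ 2 * (n * (2 * α * L * (F x - F xstar))) := by
      have e1 : ∑ i, ((F x - F xstar) - η * ⟪G, g i⟫_ℝ + L / 2 * η ^ 2 * ‖g i‖ ^ 2)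
          = n * (F x - F xstar) - η * (∑ i, ⟪G, g i⟫_ℝ)
            + L / 2 * η ^ 2 * (∑ i, ‖g i‖ ^ 2) := by
        rw [Finset.sum_add_distrib, Finset.sum_sub_distrib, Finset.sum_const,
          ← Finset.mul_sum, ← Finset.mul_sum]
        simp [mul_comm]
      rw [e1, hip] at hsum
      have : L / 2 * η ^ 2 * (∑ i, ‖g i‖ ^ 2)
          ≤ L / 2 * η ^ 2 * (n * (2 * α * L * (F x - F xstar))) := by
        apply mul_le_mul_of_nonneg_left hwgc
        positivity
      linarith
    have hGbound : η * ((n:ℝ) * (2 * μ * (F x - F xstar))) ≤ η * ((n:ℝ) * ‖G‖ ^ 2) := by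
      have h := mul_le_mul_of_nonneg_left hPL' (mul_nonneg hη0.le hnR.le)
      calc η * ((n:ℝ) * (2 * μ * (F x - F xstar))) = η * (n:ℝ) * (2 * μ * (F x - F xstar)) := by ring
        _ ≤ η * (n:ℝ) * ‖G‖ ^ 2 := h
        _ = η * ((n:ℝ) * ‖G‖ ^ 2) := by ring
    have hfinal : ∑ i, (F (x - η • g i) - F xstar)
        ≤ n * ((1 - η * μ) * (F x - F xstar)) := by
      have e2 : L / 2 * η ^ 2 * (n * (2 * α * L * (F x - F xstar)))
          = n * ((η * μ) * (F x - F xstar)) := by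
        rw [← hηident2]; ring
      rw [e2] at hsum'
      have expand : (n:ℝ) * ((1 - η * μ) * (F x - F xstar))
          = n * (F x - F xstar) - η * ((n:ℝ) * (2 * μ * (F x - F xstar)))
            + n * ((η * μ) * (F x - F xstar)) := by ring
      rw [expand]
      have : - (η * ((n:ℝ) * ‖G‖ ^ 2)) ≤ - (η * ((n:ℝ) * (2 * μ * (F x - F xstar)))) := by
        linarith
      linarith
    rw [← hηident]
    exact hfinal
  -- contraction factor nonneg
  have hρ0 : 0 ≤ 1 - μ ^ 2 / (L ^ 2 * α) := by
    have h1 : μ ^ 2 ≤ L ^ 2 * α := by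
      have : L * μ ≤ L ^ 2 * α := by
        have := (div_le_iff₀ hL).mp hα
        nlinarith
      nlinarith
    have h2 : μ ^ 2 / (L ^ 2 * α) ≤ 1 := by
      rw [div_le_one (by positivity)]; exact h1
    linarith
  -- induction on K
  induction K with
  | zero => simp [sgdRun]
  | succ K ih =>
    set ρ := 1 - μ ^ 2 / (L ^ 2 * α) with hρ
    set g : Fin n → EuclideanSpace ℝ (Fin d) → EuclideanSpace ℝ (Fin d) :=
      fun i => gradient (f i) with hgdef
    -- rewrite the sum over Fin (K+1) → Fin n as a double sum
    have hsplit : ∑ ω : Fin (K + 1) → Fin n,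
        (F (sgdRun g η x0 (K + 1) ω) - F xstar)
        = ∑ ω' : Fin K → Fin n, ∑ i : Fin n,
            (F (sgdRun g η x0 K ω' - η • g i (sgdRun g η x0 K ω')) - F xstar) := by
      rw [← (Fin.insertNthEquiv (fun _ => Fin n) (Fin.last K)).sum_comp
        (fun ω => F (sgdRun g η x0 (K + 1) ω) - F xstar)]
      rw [Fintype.sum_prod_type, Finset.sum_comm]
      apply Finset.sum_congr rfl
      intro ω' _
      apply Finset.sum_congr rfl
      intro i _
      have heq : sgdRun g η x0 (K + 1) (Fin.insertNthEquiv (fun _ => Fin n) (Fin.last K) (i, ω'))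
          = sgdRun g η x0 K ω' - η • g i (sgdRun g η x0 K ω') := by
        show sgdRun g η x0 K _ - η • g _ (sgdRun g η x0 K _) = _
        have hins : (Fin.insertNthEquiv (fun _ => Fin n) (Fin.last K)) (i, ω')
            = Fin.insertNth (Fin.last K) i ω' := rfl
        rw [hins]
        have h1 : (fun j : Fin K =>
            (Fin.insertNth (Fin.last K) i ω' : Fin (K+1) → Fin n) j.castSucc) = ω' := by
          funext j
          rw [← Fin.succAbove_last_apply j]
          exact Fin.insertNth_apply_succAbove _ _ _ _
        have h2 : (Fin.insertNth (Fin.last K) i ω' : Fin (K+1) → Fin n) (Fin.last K) = i :=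
          Fin.insertNth_apply_same _ _ _
        rw [h1, h2]
      rw [heq]
    rw [hsplit]
    have hstep : ∑ ω' : Fin K → Fin n, ∑ i : Fin n,
        (F (sgdRun g η x0 K ω' - η • g i (sgdRun g η x0 K ω')) - F xstar)
        ≤ ∑ ω' : Fin K → Fin n, (n : ℝ) * (ρ * (F (sgdRun g η x0 K ω') - F xstar)) :=
      Finset.sum_le_sum (fun ω' _ => onestep (sgdRun g η x0 K ω'))
    have hpow : (0:ℝ) < ((n : ℝ) ^ (K+1)) := by positivity
    calc ((n : ℝ) ^ (K+1))⁻¹ * ∑ ω' : Fin K → Fin n, ∑ i : Fin n,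
          (F (sgdRun g η x0 K ω' - η • g i (sgdRun g η x0 K ω')) - F xstar)
        ≤ ((n : ℝ) ^ (K+1))⁻¹ * ∑ ω' : Fin K → Fin n,
            (n : ℝ) * (ρ * (F (sgdRun g η x0 K ω') - F xstar)) :=
          mul_le_mul_of_nonneg_left hstep (by positivity)
      _ = ρ * (((n : ℝ) ^ K)⁻¹ * ∑ ω' : Fin K → Fin n,
            (F (sgdRun g η x0 K ω') - F xstar)) := by
          rw [← Finset.mul_sum, ← Finset.mul_sum]
          field_simp
          ring
      _ ≤ ρ * (ρ ^ K * (F x0 - F xstar)) := mul_le_mul_of_nonneg_left ih hρ0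
      _ = ρ ^ (K + 1) * (F x0 - F xstar) := by ring
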